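/- Let h₁, k₁, h₂, k₂ ∈ ℝ and let M be the 2×2 real matrix with rows (h₁, k₁) and (h₂, k₂). For φ ∈ L²([0,1]; ℝ²) define B(φ) = ∫_0^1 φ(t) · (M ∫_0^t φ(s) ds) dt. For n ≥ 1 and i = 0, …, n−1 let z_{n,i} : [0,1] → ℝ be given by z_{n,i}(t) = √n (t − i/n) for t ∈ [i/n, (i+1)/n], z_{n,i}(t) = 1/√n for t ∈ [(i+1)/n, 1], and z_{n,i}(t) = 0 for t ∈ [0, i/n], so that its derivative is ż_{n,i} = √n · 𝟙_{[i/n,(i+1)/n]}. Then: (i) ∫_0^1 ż_{n,i}(t) z_{n,i}(t) dt = 1/(2n); (ii) B((ż_{n,i}, 0)) = h₁/(2n) and B((0, ż_{n,i})) = k₂/(2n); and (iii) Σ_{i=0}^{n−1} [B((ż_{n,i}, 0)) + B((0, ż_{n,i}))] = (h₁ + k₂)/2 for every n ≥ 1, i.e. the renormalization term associated with the piecewise linear projections equals one half of the divergence ∇·α of the linear vector field α(x,y) = (h₁x + k₁y, h₂x + k₂y), for every n. -/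

import Mathlib

open MeasureTheory Real Matrix Set intervalIntegral

/-- With `M = !![h₁, k₁; h₂, k₂]` and
`B(φ) = ∫_0^1 φ(t) · (M ∫_0^t φ(s) ds) dt`, let `z_{n,i}` (for `0 ≤ i < n`) be the piecewise
linear functions `z_{n,i}(t) = √n (t − i/n)` on `[i/n, (i+1)/n]`, `1/√n` on `[(i+1)/n, 1]`,
`0` on `[0, i/n]`, with derivative `ż_{n,i} = √n · 𝟙_{[i/n,(i+1)/n]}`. Then
(i) `∫_0^1 ż_{n,i} z_{n,i} = 1/(2n)`; (ii) `B((ż_{n,i}, 0)) = h₁/(2n)` and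
`B((0, ż_{n,i})) = k₂/(2n)`; (iii) `Σ_{i<n} [B((ż_{n,i},0)) + B((0,ż_{n,i}))] = (h₁ + k₂)/2`
for every `n ≥ 1`: the renormalization term of the piecewise linear projections is one half of
the divergence of `α(x,y) = (h₁x + k₁y, h₂x + k₂y)`. -/
theorem statement11 (h₁ k₁ h₂ k₂ : ℝ)
    (M : Matrix (Fin 2) (Fin 2) ℝ) (hM : M = !![h₁, k₁; h₂, k₂])
    (B : (ℝ → Fin 2 → ℝ) → ℝ)
    (hB : ∀ φ : ℝ → Fin 2 → ℝ,
      B φ = ∫ t in (0:ℝ)..1, φ t ⬝ᵥ M.mulVec (∫ s in (0:ℝ)..t, φ s))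
    (n : ℕ) (hn : 1 ≤ n)
    (z zdot : ℕ → ℝ → ℝ)
    (hz1 : ∀ i : ℕ, ∀ t ∈ Icc ((i : ℝ) / n) (((i : ℝ) + 1) / n),
      z i t = Real.sqrt n * (t - (i : ℝ) / n))
    (hz2 : ∀ i : ℕ, ∀ t ∈ Icc (((i : ℝ) + 1) / n) (1 : ℝ), z i t = 1 / Real.sqrt n)
    (hz3 : ∀ i : ℕ, ∀ t ∈ Icc (0 : ℝ) ((i : ℝ) / n), z i t = 0)
    (hzdot : ∀ i : ℕ, ∀ t : ℝ,
      zdot i t = Real.sqrt n * (Icc ((i : ℝ) / n) (((i : ℝ) + 1) / n)).indicator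
        (fun _ => (1 : ℝ)) t) :
    (∀ i < n, ∫ t in (0:ℝ)..1, zdot i t * z i t = 1 / (2 * (n : ℝ))) ∧
    (∀ i < n, B (fun t => ![zdot i t, 0]) = h₁ / (2 * (n : ℝ)) ∧
      B (fun t => ![0, zdot i t]) = k₂ / (2 * (n : ℝ))) ∧
    ∑ i ∈ Finset.range n, (B (fun t => ![zdot i t, 0]) + B (fun t => ![0, zdot i t]))
      = (h₁ + k₂) / 2 := by
  have hnR : (0:ℝ) < n := by exact_mod_cast hn
  have hnne : (n:ℝ) ≠ 0 := ne_of_gt hnR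
  have hsq : Real.sqrt n * Real.sqrt n = (n:ℝ) := Real.mul_self_sqrt (le_of_lt hnR)
  have hsqpos : (0:ℝ) < Real.sqrt n := Real.sqrt_pos.mpr hnR
  have hzdInt : ∀ i, Integrable (zdot i) := by
    intro i
    have h1 : Integrable (fun t => Real.sqrt n *
        (Icc ((i:ℝ)/n) (((i:ℝ)+1)/n)).indicator (fun _ => (1:ℝ)) t) := by
      apply Integrable.const_mul
      rw [integrable_indicator_iff measurableSet_Icc]
      exact integrableOn_const measure_Icc_lt_top.ne
    exact h1.congr (Filter.Eventually.of_forall fun t => (hzdot i t).symm)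
  have key : ∀ i < n,
      (∀ t ∈ Icc (0:ℝ) 1, ∫ s in (0:ℝ)..t, zdot i s = z i t) ∧
      (∫ t in (0:ℝ)..1, zdot i t * z i t = 1 / (2 * (n:ℝ))) := by
    intro i hi
    set a : ℝ := (i:ℝ)/n with ha_def
    set b : ℝ := ((i:ℝ)+1)/n with hb_def
    have ha0 : (0:ℝ) ≤ a := by positivity
    have hab : a ≤ b := by
      rw [ha_def, hb_def, div_le_div_iff_of_pos_right hnR]; linarith
    have hb1 : b ≤ 1 := by
      rw [hb_def, div_le_one hnR]
      have : (i:ℝ) + 1 ≤ (n:ℝ) := by exact_mod_cast hi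
      linarith
    have hbval : b = a + 1/(n:ℝ) := by rw [ha_def, hb_def]; field_simp
    have hzd_in : ∀ t ∈ Icc a b, zdot i t = Real.sqrt n := by
      intro t ht
      rw [hzdot, indicator_of_mem ht, mul_one]
    have hzd_out : ∀ t ∉ Icc a b, zdot i t = 0 := by
      intro t ht
      rw [hzdot, indicator_of_notMem ht, mul_zero]
    have hF0 : ∀ t ∈ Icc (0:ℝ) a, ∫ s in (0:ℝ)..t, zdot i s = 0 := by
      intro t ht
      rw [intervalIntegral.integral_of_le ht.1, integral_Ioc_eq_integral_Ioo,
        setIntegral_congr_fun measurableSet_Ioo (g := fun _ => (0:ℝ))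
        (fun s hs => hzd_out s (fun hmem => absurd hmem.1 (not_le.mpr (lt_of_lt_of_le hs.2 ht.2))))]
      simp
    have hFb : ∀ t, b ≤ t → ∫ s in b..t, zdot i s = 0 := by
      intro t ht
      rw [intervalIntegral.integral_of_le ht,
        setIntegral_congr_fun measurableSet_Ioc (g := fun _ => (0:ℝ))
        (fun s hs => hzd_out s (fun hmem => absurd hmem.2 (not_le.mpr hs.1)))]
      simp
    have hFa : ∀ t ∈ Icc a b, ∫ s in a..t, zdot i s = Real.sqrt n * (t - a) := by
      intro t ht
      have hcg := intervalIntegral.integral_congr (μ := volume) (a := a) (b := t)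
        (f := zdot i) (g := fun _ => Real.sqrt n)
        (fun s hs => hzd_in s ⟨((uIcc_of_le ht.1) ▸ hs).1, (((uIcc_of_le ht.1) ▸ hs).2).trans ht.2⟩)
      rw [hcg, intervalIntegral.integral_const, smul_eq_mul]; ring
    have hF : ∀ t ∈ Icc (0:ℝ) 1, ∫ s in (0:ℝ)..t, zdot i s = z i t := by
      intro t ht
      rcases le_or_gt t a with h | h
      · rw [hF0 t ⟨ht.1, h⟩, hz3 i t ⟨ht.1, h⟩]
      · rcases le_or_gt t b with h' | h'
        · rw [← intervalIntegral.integral_add_adjacent_intervals (b := a)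
            ((hzdInt i).intervalIntegrable) ((hzdInt i).intervalIntegrable),
            hF0 a ⟨ha0, le_refl a⟩, hFa t ⟨le_of_lt h, h'⟩, hz1 i t ⟨le_of_lt h, h'⟩]
          ring
        · rw [← intervalIntegral.integral_add_adjacent_intervals (b := b)
            ((hzdInt i).intervalIntegrable) ((hzdInt i).intervalIntegrable),
            hFb t (le_of_lt h'),
            ← intervalIntegral.integral_add_adjacent_intervals (b := a)
            ((hzdInt i).intervalIntegrable) ((hzdInt i).intervalIntegrable),
            hF0 a ⟨ha0, le_refl a⟩, hFa b ⟨hab, le_refl b⟩, hz2 i t ⟨le_of_lt h', ht.2⟩,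
            hbval]
          rw [eq_div_iff (ne_of_gt hsqpos)]
          field_simp
          linear_combination hsq
    refine ⟨hF, ?_⟩
    -- part (i): replace integrand by an explicit indicator function
    set f : ℝ → ℝ := fun t => (Icc a b).indicator (fun t => (n:ℝ) * (t - a)) t with hf_def
    have hfInt : Integrable f := by
      rw [hf_def, integrable_indicator_iff measurableSet_Icc]
      exact (continuous_const.mul (continuous_id.sub continuous_const)).integrableOn_Icc
    have hcongr : ∫ t in (0:ℝ)..1, zdot i t * z i t = ∫ t in (0:ℝ)..1, f t := by
      apply intervalIntegral.integral_congr
      intro t ht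
      rw [uIcc_of_le (by norm_num : (0:ℝ) ≤ 1)] at ht
      show zdot i t * z i t = f t
      by_cases hmem : t ∈ Icc a b
      · rw [hzd_in t hmem, hz1 i t hmem, hf_def]
        simp only [indicator_of_mem hmem]
        rw [← mul_assoc, hsq]
      · rw [hzd_out t hmem, hf_def]
        simp [indicator_of_notMem hmem]
    rw [hcongr]
    have split1 : ∫ t in (0:ℝ)..1, f t =
        (∫ t in (0:ℝ)..a, f t) + ((∫ t in a..b, f t) + ∫ t in b..1, f t) := by
      rw [intervalIntegral.integral_add_adjacent_intervals
          (hfInt.intervalIntegrable) (hfInt.intervalIntegrable),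
        intervalIntegral.integral_add_adjacent_intervals
          (hfInt.intervalIntegrable) (hfInt.intervalIntegrable)]
    have e1 : ∫ t in (0:ℝ)..a, f t = 0 := by
      have : ∀ t ∈ uIcc (0:ℝ) a, f t = 0 := by
        intro t ht
        rw [uIcc_of_le ha0] at ht
        rw [hf_def]
        by_cases hmem : t ∈ Icc a b
        · have : t = a := le_antisymm ht.2 hmem.1
          simp [indicator_of_mem hmem, this]
        · simp [indicator_of_notMem hmem]
      rw [intervalIntegral.integral_congr (g := fun _ => (0:ℝ)) this]
      simp
    have e3 : ∫ t in b..1, f t = 0 := by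
      rw [intervalIntegral.integral_of_le hb1, integral_Ioc_eq_integral_Ioo,
        setIntegral_congr_fun measurableSet_Ioo (g := fun _ => (0:ℝ))
        (fun t ht => by
          rw [hf_def]
          exact indicator_of_notMem (fun hmem => absurd hmem.2 (not_le.mpr ht.1)) _)]
      simp
    have e2 : ∫ t in a..b, f t = 1 / (2 * (n:ℝ)) := by
      have hcg : ∀ t ∈ uIcc a b, f t = (n:ℝ) * (t - a) := by
        intro t ht
        rw [uIcc_of_le hab] at ht
        rw [hf_def]; exact indicator_of_mem ht _
      rw [intervalIntegral.integral_congr hcg, intervalIntegral.integral_const_mul,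
        intervalIntegral.integral_sub intervalIntegral.intervalIntegrable_id
          intervalIntegrable_const,
        integral_id, intervalIntegral.integral_const, hbval, smul_eq_mul]
      field_simp
      ring
    rw [split1, e1, e2, e3]
    ring
  -- part (ii)
  have key2 : ∀ i < n, B (fun t => ![zdot i t, 0]) = h₁ / (2 * (n : ℝ)) ∧
      B (fun t => ![0, zdot i t]) = k₂ / (2 * (n : ℝ)) := by
    intro i hi
    obtain ⟨hF, hI⟩ := key i hi
    constructor
    · rw [hB]
      have hvec : ∀ t : ℝ, (∫ s in (0:ℝ)..t, ![zdot i s, 0]) =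
          (∫ s in (0:ℝ)..t, zdot i s) • (![1, 0] : Fin 2 → ℝ) := by
        intro t
        have hrw : (fun s => ![zdot i s, (0:ℝ)]) = fun s => zdot i s • (![1, 0] : Fin 2 → ℝ) := by
          funext s
          funext j
          fin_cases j <;> simp
        rw [hrw, intervalIntegral.integral_smul_const]
      have hpt : ∀ t ∈ uIcc (0:ℝ) 1,
          (![zdot i t, 0] ⬝ᵥ M.mulVec (∫ s in (0:ℝ)..t, ![zdot i s, 0]))
            = h₁ * (zdot i t * z i t) := by
        intro t ht
        rw [uIcc_of_le (by norm_num : (0:ℝ) ≤ 1)] at ht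
        rw [hvec, hF t ht, hM]
        simp [Matrix.mulVec, dotProduct, Fin.sum_univ_two]
        ring
      rw [intervalIntegral.integral_congr hpt, intervalIntegral.integral_const_mul, hI]
      ring
    · rw [hB]
      have hvec : ∀ t : ℝ, (∫ s in (0:ℝ)..t, ![0, zdot i s]) =
          (∫ s in (0:ℝ)..t, zdot i s) • (![0, 1] : Fin 2 → ℝ) := by
        intro t
        have hrw : (fun s => ![(0:ℝ), zdot i s]) = fun s => zdot i s • (![0, 1] : Fin 2 → ℝ) := by
          funext s
          funext j
          fin_cases j <;> simp
        rw [hrw, intervalIntegral.integral_smul_const]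
      have hpt : ∀ t ∈ uIcc (0:ℝ) 1,
          (![0, zdot i t] ⬝ᵥ M.mulVec (∫ s in (0:ℝ)..t, ![0, zdot i s]))
            = k₂ * (zdot i t * z i t) := by
        intro t ht
        rw [uIcc_of_le (by norm_num : (0:ℝ) ≤ 1)] at ht
        rw [hvec, hF t ht, hM]
        simp [Matrix.mulVec, dotProduct, Fin.sum_univ_two]
        ring
      rw [intervalIntegral.integral_congr hpt, intervalIntegral.integral_const_mul, hI]
      ring
  refine ⟨fun i hi => (key i hi).2, key2, ?_⟩
  have : ∀ i ∈ Finset.range n,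
      B (fun t => ![zdot i t, 0]) + B (fun t => ![0, zdot i t])
        = h₁ / (2 * (n:ℝ)) + k₂ / (2 * (n:ℝ)) := by
    intro i hi
    obtain ⟨e1, e2⟩ := key2 i (Finset.mem_range.mp hi)
    rw [e1, e2]
  rw [Finset.sum_congr rfl this, Finset.sum_const, Finset.card_range, nsmul_eq_mul]
  field_simp
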